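/- Let A, B be bounded linear operators on a complex Hilbert space H, K a nonempty set of unit vectors, α ∈ [0,1], ber(T)=sup_{k∈K}|⟨T k,k⟩|, ‖T‖_ber=sup_{k,l∈K}|⟨T k,l⟩|. Then ‖α A + (1−α) B‖_ber² ≤ ber(α² A*A + (1−α)² B*B) + 2 α (1−α) ber(B*A). -/

import Mathlib

open ContinuousLinearMap

noncomputable def berNum {H : Type*} [NormedAddCommGroup H] [InnerProductSpace ℂ H]
    (K : Set H) (T : H →L[ℂ] H) : ℝ :=
  sSup {x : ℝ | ∃ k ∈ K, x = ‖(inner ℂ (T k) k : ℂ)‖}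

noncomputable def berNorm {H : Type*} [NormedAddCommGroup H] [InnerProductSpace ℂ H]
    (K : Set H) (T : H →L[ℂ] H) : ℝ :=
  sSup {x : ℝ | ∃ k ∈ K, ∃ l ∈ K, x = ‖(inner ℂ (T k) l : ℂ)‖}

lemma key_identity {H : Type*} [NormedAddCommGroup H] [InnerProductSpace ℂ H] [CompleteSpace H]
    (A B : H →L[ℂ] H) (α : ℝ) (k : H) :
    (inner ℂ ((α • A + (1 - α) • B) k) ((α • A + (1 - α) • B) k) : ℂ)
      = inner ℂ (((α ^ 2) • (adjoint A * A) + ((1 - α) ^ 2) • (adjoint B * B)) k) k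
        + (α : ℂ) * (1 - α) * ((inner ℂ ((adjoint B * A) k) k : ℂ) + inner ℂ ((adjoint A * B) k) k) := by
  have h : ∀ (r : ℝ) (x : H), r • x = (r : ℂ) • x := fun r x => (RCLike.real_smul_eq_coe_smul (K := ℂ) r x)
  simp only [add_apply, smul_apply, ContinuousLinearMap.mul_def, ContinuousLinearMap.comp_apply, h, inner_add_left, inner_add_right,
    inner_smul_left, inner_smul_right, adjoint_inner_left, Complex.conj_ofReal]
  push_cast
  ring

theorem berNorm_convex_comb {H : Type*} [NormedAddCommGroup H] [InnerProductSpace ℂ H] [CompleteSpace H]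
    (A B : H →L[ℂ] H) (α : ℝ) (hα : α ∈ Set.Icc (0 : ℝ) 1) (K : Set H) (hK : K.Nonempty) (hK1 : ∀ k ∈ K, ‖k‖ = 1) :
    (berNorm K (α • A + (1 - α) • B)) ^ 2
      ≤ berNum K ((α ^ 2) • (adjoint A * A) + ((1 - α) ^ 2) • (adjoint B * B))
        + 2 * α * (1 - α) * berNum K (adjoint B * A) := by
  obtain ⟨hα0, hα1⟩ := hα
  set T := α • A + (1 - α) • B with hT
  set M := (α ^ 2) • (adjoint A * A) + ((1 - α) ^ 2) • (adjoint B * B) with hM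
  set C := berNum K M + 2 * α * (1 - α) * berNum K (adjoint B * A) with hC
  -- boundedness of berNum sets and element bound
  have le_berNum : ∀ (S : H →L[ℂ] H), ∀ k ∈ K, ‖(inner ℂ (S k) k : ℂ)‖ ≤ berNum K S := by
    intro S k hk
    apply le_csSup
    · refine ⟨‖S‖, ?_⟩
      rintro x ⟨j, hj, rfl⟩
      calc ‖(inner ℂ (S j) j : ℂ)‖ ≤ ‖S j‖ * ‖j‖ := norm_inner_le_norm _ _
        _ ≤ ‖S‖ * ‖j‖ * ‖j‖ := by
            gcongr; exact S.le_opNorm j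
        _ = ‖S‖ := by rw [hK1 j hj]; ring
    · exact ⟨k, hk, rfl⟩
  -- main pointwise bound
  have hTk : ∀ k ∈ K, ‖T k‖ ^ 2 ≤ C := by
    intro k hk
    have h1 : (‖T k‖ : ℝ) ^ 2 = ‖(inner ℂ (T k) (T k) : ℂ)‖ := by
      rw [inner_self_eq_norm_sq_to_K (𝕜 := ℂ)]
      rw [norm_pow]
      simp
    have hsymm : ‖(inner ℂ ((adjoint A * B) k) k : ℂ)‖ = ‖(inner ℂ ((adjoint B * A) k) k : ℂ)‖ := by
      simp only [ContinuousLinearMap.mul_def, ContinuousLinearMap.comp_apply, adjoint_inner_left]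
      exact norm_inner_symm _ _
    have hαα : (0 : ℝ) ≤ α * (1 - α) := mul_nonneg hα0 (by linarith)
    calc ‖T k‖ ^ 2 = ‖(inner ℂ (T k) (T k) : ℂ)‖ := h1
      _ = ‖(inner ℂ (M k) k : ℂ)
            + (α : ℂ) * (1 - α) * ((inner ℂ ((adjoint B * A) k) k : ℂ) + inner ℂ ((adjoint A * B) k) k)‖ := by
          rw [key_identity A B α k]
      _ ≤ ‖(inner ℂ (M k) k : ℂ)‖
            + ‖(α : ℂ) * (1 - α)‖ * (‖(inner ℂ ((adjoint B * A) k) k : ℂ)‖ + ‖(inner ℂ ((adjoint A * B) k) k : ℂ)‖) := by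
          refine (norm_add_le _ _).trans ?_
          gcongr
          rw [norm_mul]
          exact mul_le_mul_of_nonneg_left (norm_add_le _ _) (norm_nonneg _)
      _ = ‖(inner ℂ (M k) k : ℂ)‖ + (α * (1 - α)) * (2 * ‖(inner ℂ ((adjoint B * A) k) k : ℂ)‖) := by
          rw [hsymm, norm_mul]
          have : ‖(α : ℂ)‖ = α := by simpa using abs_of_nonneg hα0
          have h2 : ‖(1 : ℂ) - (α : ℂ)‖ = 1 - α := by
            rw [show (1 : ℂ) - (α : ℂ) = ((1 - α : ℝ) : ℂ) by push_cast; ring,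
              Complex.norm_real]
            exact abs_of_nonneg (by linarith)
          rw [this, h2]
          ring
      _ ≤ berNum K M + (α * (1 - α)) * (2 * berNum K (adjoint B * A)) := by
          gcongr
          · exact le_berNum M k hk
          · exact le_berNum _ k hk
      _ = C := by rw [hC]; ring
  obtain ⟨k₀, hk₀⟩ := hK
  have hC0 : 0 ≤ C := le_trans (by positivity) (hTk k₀ hk₀)
  -- bound on berNorm set elements
  have hx : ∀ x ∈ {x : ℝ | ∃ k ∈ K, ∃ l ∈ K, x = ‖(inner ℂ (T k) l : ℂ)‖}, x ≤ Real.sqrt C := by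
    rintro x ⟨k, hk, l, hl, rfl⟩
    have h1 : ‖(inner ℂ (T k) l : ℂ)‖ ≤ ‖T k‖ := by
      calc ‖(inner ℂ (T k) l : ℂ)‖ ≤ ‖T k‖ * ‖l‖ := norm_inner_le_norm _ _
        _ = ‖T k‖ := by rw [hK1 l hl, mul_one]
    have h2 : ‖T k‖ ≤ Real.sqrt C := by
      rw [show (C : ℝ) = Real.sqrt C ^ 2 by rw [Real.sq_sqrt hC0]] at hTk
      have := hTk k hk
      exact (pow_le_pow_iff_left₀ (norm_nonneg _) (Real.sqrt_nonneg _) (by norm_num)).mp this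
    exact h1.trans h2
  have hne : ∃ x, x ∈ {x : ℝ | ∃ k ∈ K, ∃ l ∈ K, x = ‖(inner ℂ (T k) l : ℂ)‖} :=
    ⟨_, k₀, hk₀, k₀, hk₀, rfl⟩
  have hub : berNorm K T ≤ Real.sqrt C := csSup_le (Set.nonempty_def.mpr hne) hx
  have hlb : 0 ≤ berNorm K T := by
    obtain ⟨x, hxmem⟩ := hne
    have h0 : 0 ≤ x := by obtain ⟨k, hk, l, hl, rfl⟩ := hxmem; exact norm_nonneg _
    exact h0.trans (le_csSup ⟨Real.sqrt C, hx⟩ hxmem)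
  calc (berNorm K T) ^ 2 ≤ Real.sqrt C ^ 2 := by gcongr
    _ = C := Real.sq_sqrt hC0
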